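/- Let 0 < ε and τ > 0 with ε + τ ≤ 1, let p > 1 and ω > 0 be real, and let r : [ε, ε+τ] → ℝ be continuously differentiable. Define u(x) = (r(|x|)/|x|) x on the annulus Ω_{(ε,τ)} = {x ∈ ℝ² : ε ≤ |x| ≤ ε + τ}. Then the elastic energy term E₁(u; Ω_{(ε,τ)}) = ω ∫_{Ω_{(ε,τ)}} |Du(x)|^p dx (with |·| the Frobenius norm of the 2×2 derivative matrix) satisfies the exact identity E₁(u; Ω_{(ε,τ)}) = 2πω ∫_ε^{ε+τ} ( r(t)² + r'(t)² t² )^{p/2} t^{1−p} dt. -/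

import Mathlib

noncomputable section

open Real

/-- The reference triangle `T̂ = {x : 0 ≤ x₁, 0 ≤ x₂, x₁ + x₂ ≤ 1}`. -/
def refT : Set (ℝ × ℝ) := {x | 0 ≤ x.1 ∧ 0 ≤ x.2 ∧ x.1 + x.2 ≤ 1}

/-- The quadratic iso-parametric map determined by the six nodes
`b₁, b₂, b₃, b₁₂, b₁₃, b₂₃`, using barycentric coordinates
`λ₁ = x₁`, `λ₂ = x₂`, `λ₃ = 1 - x₁ - x₂` and the quadratic Lagrange basis. -/
def isoQ (b1 b2 b3 b12 b13 b23 : ℝ × ℝ) (x : ℝ × ℝ) : ℝ × ℝ :=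
  (x.1 * (2 * x.1 - 1)) • b1 + (x.2 * (2 * x.2 - 1)) • b2 +
    ((1 - x.1 - x.2) * (2 * (1 - x.1 - x.2) - 1)) • b3 +
    (4 * (x.1 * x.2)) • b12 + (4 * (x.1 * (1 - x.1 - x.2))) • b13 +
    (4 * (x.2 * (1 - x.1 - x.2))) • b23

/-- Jacobian determinant of a planar map (determinant of the 2×2 derivative matrix). -/
def jacDet (f : ℝ × ℝ → ℝ × ℝ) (x : ℝ × ℝ) : ℝ :=
  (fderiv ℝ f x (1, 0)).1 * (fderiv ℝ f x (0, 1)).2 -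
    (fderiv ℝ f x (1, 0)).2 * (fderiv ℝ f x (0, 1)).1

/-- Euclidean norm on `ℝ²`. -/
def enorm2 (p : ℝ × ℝ) : ℝ := Real.sqrt (p.1 ^ 2 + p.2 ^ 2)

/-- Polar angle of a point of `ℝ²` (argument of the corresponding complex number). -/
def polarAngle (p : ℝ × ℝ) : ℝ := Complex.arg ⟨p.1, p.2⟩

/-- Squared Frobenius norm of the 2×2 derivative matrix of a planar map. -/
def frobSq (f : ℝ × ℝ → ℝ × ℝ) (x : ℝ × ℝ) : ℝ :=
  (fderiv ℝ f x (1, 0)).1 ^ 2 + (fderiv ℝ f x (1, 0)).2 ^ 2 +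
    (fderiv ℝ f x (0, 1)).1 ^ 2 + (fderiv ℝ f x (0, 1)).2 ^ 2

open MeasureTheory

lemma radial_frobSq (r : ℝ → ℝ) (R' : ℝ) (x : ℝ × ℝ) (hx : 0 < enorm2 x)
    (hr : HasDerivAt r R' (enorm2 x)) :
    frobSq (fun y : ℝ × ℝ => (r (enorm2 y) / enorm2 y) • y) x
      = R' ^ 2 + (r (enorm2 x) / enorm2 x) ^ 2 := by
  set R := enorm2 x with hRdef
  have hsq : x.1 ^ 2 + x.2 ^ 2 = R ^ 2 := by
    rw [hRdef]; rw [enorm2, sq_sqrt (by positivity)]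
  have hRne : R ≠ 0 := hx.ne'
  have hx2 : x.1 ^ 2 + x.2 ^ 2 ≠ 0 := by rw [hsq]; positivity
  have hn'' : HasFDerivAt (fun y : ℝ × ℝ => y.1 * y.1 + y.2 * y.2) _ x :=
    ((hasFDerivAt_fst (𝕜 := ℝ) (p := x)).mul hasFDerivAt_fst).add
      ((hasFDerivAt_snd (𝕜 := ℝ) (p := x)).mul hasFDerivAt_snd)
  have hn : HasFDerivAt (fun y : ℝ × ℝ => y.1 ^ 2 + y.2 ^ 2)
      (x.1 • ContinuousLinearMap.fst ℝ ℝ ℝ + x.1 • ContinuousLinearMap.fst ℝ ℝ ℝ +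
        (x.2 • ContinuousLinearMap.snd ℝ ℝ ℝ + x.2 • ContinuousLinearMap.snd ℝ ℝ ℝ)) x := by
    simpa only [pow_two] using hn''
  have hnorm : HasFDerivAt enorm2
      ((1 / (2 * Real.sqrt (x.1 ^ 2 + x.2 ^ 2))) •
        (x.1 • ContinuousLinearMap.fst ℝ ℝ ℝ + x.1 • ContinuousLinearMap.fst ℝ ℝ ℝ +
          (x.2 • ContinuousLinearMap.snd ℝ ℝ ℝ + x.2 • ContinuousLinearMap.snd ℝ ℝ ℝ))) x :=
    (Real.hasDerivAt_sqrt hx2).comp_hasFDerivAt x hn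
  have hg : HasDerivAt (fun t => r t / t) ((R' * R - r R * 1) / R ^ 2) R :=
    hr.div (hasDerivAt_id R) hRne
  have hcomp : HasFDerivAt (fun y : ℝ × ℝ => r (enorm2 y) / enorm2 y)
      (((R' * R - r R * 1) / R ^ 2) •
        ((1 / (2 * Real.sqrt (x.1 ^ 2 + x.2 ^ 2))) •
          (x.1 • ContinuousLinearMap.fst ℝ ℝ ℝ + x.1 • ContinuousLinearMap.fst ℝ ℝ ℝ +
            (x.2 • ContinuousLinearMap.snd ℝ ℝ ℝ + x.2 • ContinuousLinearMap.snd ℝ ℝ ℝ)))) x :=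
    by have h := hg.comp_hasFDerivAt x hnorm; exact h
  have hf := hcomp.smul (hasFDerivAt_id x)
  simp only [id_eq] at hf
  have hfd := hf.fderiv
  have hRs : Real.sqrt (x.1 ^ 2 + x.2 ^ 2) = R := rfl
  set c : ℝ := (R' - r R / R) / R ^ 2 with hcdef
  have happ : ∀ v : ℝ × ℝ, fderiv ℝ (fun y : ℝ × ℝ => (r (enorm2 y) / enorm2 y) • y) x v
      = (r R / R * v.1 + c * (x.1 * v.1 + x.2 * v.2) * x.1,
         r R / R * v.2 + c * (x.1 * v.1 + x.2 * v.2) * x.2) := by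
    intro v
    rw [show (fun y : ℝ × ℝ => (r (enorm2 y) / enorm2 y) • y) = (fun y => r (enorm2 y) / enorm2 y) • id from rfl, hfd]
    simp only [ContinuousLinearMap.add_apply, ContinuousLinearMap.smul_apply,
      ContinuousLinearMap.smulRight_apply, ContinuousLinearMap.coe_fst',
      ContinuousLinearMap.coe_snd', ContinuousLinearMap.id_apply, hRs,
      Prod.smul_mk, Prod.fst_add, Prod.snd_add, Prod.smul_fst, Prod.smul_snd,
      smul_eq_mul, ← hRdef]
    rw [Prod.ext_iff]
    constructor <;>
      (simp only [Prod.smul_fst, Prod.smul_snd, Prod.fst_add, Prod.snd_add, smul_eq_mul]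
       rw [hcdef]
       field_simp [hRne]
       ring)
  rw [frobSq]
  rw [happ (1,0), happ (0,1)]
  simp only [mul_one, mul_zero, add_zero, zero_add]
  have hc2 : c * R ^ 2 = R' - r R / R := by rw [hcdef]; field_simp
  have expand : (r R / R + c * x.1 * x.1) ^ 2 + (c * x.1 * x.2) ^ 2
      + (c * x.2 * x.1) ^ 2 + (r R / R + c * x.2 * x.2) ^ 2
      = 2 * (r R / R) ^ 2 + 2 * (r R / R) * (c * (x.1 ^ 2 + x.2 ^ 2))
        + c ^ 2 * (x.1 ^ 2 + x.2 ^ 2) ^ 2 := by ring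
  rw [expand, hsq]
  have : 2 * (r R / R) ^ 2 + 2 * (r R / R) * (c * R ^ 2) + c ^ 2 * (R ^ 2) ^ 2
      = 2 * (r R / R) ^ 2 + 2 * (r R / R) * (c * R ^ 2) + (c * R ^ 2) ^ 2 := by ring
  rw [this, hc2]
  ring

lemma enorm2_polar (ρ θ : ℝ) (hρ : 0 ≤ ρ) : enorm2 (polarCoord.symm (ρ, θ)) = ρ := by
  simp only [polarCoord, OpenPartialHomeomorph.mk_coe_symm, PartialEquiv.coe_symm_mk, enorm2]
  rw [show (ρ * Real.cos θ) ^ 2 + (ρ * Real.sin θ) ^ 2 = ρ ^ 2 by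
    have := Real.sin_sq_add_cos_sq θ; nlinarith]
  exact Real.sqrt_sq hρ

/-- The exact polar-coordinates formula for the elastic energy term
`E₁(u; Ω_{(ε,τ)}) = ω∫_{Ω_{(ε,τ)}} |Du|^p dx` of a radially symmetric
deformation `u(x) = (r(|x|)/|x|)x` on the annulus `ε ≤ |x| ≤ ε + τ`. -/
theorem radial_E1_formula (ε τ p ω : ℝ) (hε : 0 < ε) (hτ : 0 < τ) (hετ : ε + τ ≤ 1)
    (hp : 1 < p) (hω : 0 < ω) (r r' : ℝ → ℝ)
    (hderiv : ∀ t ∈ Set.Icc ε (ε + τ), HasDerivAt r (r' t) t)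
    (hcont : ContinuousOn r' (Set.Icc ε (ε + τ))) :
    ω * ∫ x in {x : ℝ × ℝ | ε ≤ enorm2 x ∧ enorm2 x ≤ ε + τ},
        Real.sqrt (frobSq (fun y : ℝ × ℝ => (r (enorm2 y) / enorm2 y) • y) x) ^ p =
      2 * π * ω *
        ∫ t in ε..(ε + τ), (r t ^ 2 + r' t ^ 2 * t ^ 2) ^ (p / 2) * t ^ (1 - p) := by
  have hcont2 : Continuous enorm2 := by unfold enorm2; fun_prop
  set f : ℝ × ℝ → ℝ × ℝ := fun y => (r (enorm2 y) / enorm2 y) • y with hfdef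
  set g : ℝ × ℝ → ℝ := fun x => Real.sqrt (frobSq f x) ^ p with hgdef
  set S : Set (ℝ × ℝ) := {x : ℝ × ℝ | ε ≤ enorm2 x ∧ enorm2 x ≤ ε + τ} with hSdef
  set F : ℝ → ℝ := fun t => (r t ^ 2 + r' t ^ 2 * t ^ 2) ^ (p / 2) * t ^ (1 - p) with hFdef
  have hS : MeasurableSet S := by
    have : S = enorm2 ⁻¹' (Set.Icc ε (ε + τ)) := by
      ext x; simp [hSdef, Set.mem_Icc]
    rw [this]
    exact hcont2.measurable measurableSet_Icc
  -- pointwise identity on polar target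
  have key : ∀ q ∈ polarCoord.target,
      q.1 • S.indicator g (polarCoord.symm q)
        = (Set.Icc ε (ε + τ)).indicator F q.1 * (1 : ℝ) := by
    rintro ⟨ρ, θ⟩ ⟨hρ, -⟩
    have hρ0 : (0:ℝ) < ρ := hρ
    have hnorm : enorm2 (polarCoord.symm (ρ, θ)) = ρ := enorm2_polar ρ θ hρ0.le
    by_cases hmem : ρ ∈ Set.Icc ε (ε + τ)
    · have hmemS : polarCoord.symm (ρ, θ) ∈ S := by
        rw [hSdef]; simp only [Set.mem_setOf_eq, hnorm]; exact ⟨hmem.1, hmem.2⟩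
      rw [Set.indicator_of_mem hmemS, Set.indicator_of_mem hmem, mul_one]
      have hder : HasDerivAt r (r' ρ) ρ := hderiv ρ hmem
      have hfrob := radial_frobSq r (r' ρ) (polarCoord.symm (ρ, θ))
        (by rw [hnorm]; exact hρ0) (by rw [hnorm]; exact hder)
      rw [hgdef, hFdef]
      simp only [hfdef, hfrob, hnorm, smul_eq_mul]
      have hA : r' ρ ^ 2 + (r ρ / ρ) ^ 2
          = (r ρ ^ 2 + r' ρ ^ 2 * ρ ^ 2) / ρ ^ 2 := by
        field_simp; ring
      rw [hA]
      have hnum : (0:ℝ) ≤ r ρ ^ 2 + r' ρ ^ 2 * ρ ^ 2 := by positivity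
      have hden : (0:ℝ) < ρ ^ 2 := by positivity
      have e1 : Real.sqrt ((r ρ ^ 2 + r' ρ ^ 2 * ρ ^ 2) / ρ ^ 2) ^ p
          = ((r ρ ^ 2 + r' ρ ^ 2 * ρ ^ 2) / ρ ^ 2) ^ (p / 2) := by
        rw [Real.sqrt_eq_rpow, ← Real.rpow_mul (div_nonneg hnum hden.le)]
        congr 1; ring
      have e2 : ((r ρ ^ 2 + r' ρ ^ 2 * ρ ^ 2) / ρ ^ 2) ^ (p / 2)
          = (r ρ ^ 2 + r' ρ ^ 2 * ρ ^ 2) ^ (p / 2) / (ρ ^ 2) ^ (p / 2) :=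
        Real.div_rpow hnum (sq_nonneg ρ) _
      have e3 : ((ρ:ℝ) ^ 2) ^ (p / 2) = ρ ^ p := by
        rw [← Real.rpow_natCast ρ 2, ← Real.rpow_mul hρ0.le]
        congr 1
        push_cast
        ring
      rw [e1, e2, e3, Real.rpow_sub hρ0, Real.rpow_one]
      ring
    · have hmemS : polarCoord.symm (ρ, θ) ∉ S := by
        rw [hSdef]; simp only [Set.mem_setOf_eq, hnorm]
        intro h; exact hmem ⟨h.1, h.2⟩
      rw [Set.indicator_of_notMem hmemS, Set.indicator_of_notMem hmem, smul_zero, zero_mul]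
  -- assemble
  have step1 : (∫ x in S, g x) = ∫ x, S.indicator g x := (integral_indicator hS).symm
  have step2 : (∫ x, S.indicator g x)
      = ∫ q in polarCoord.target, q.1 • S.indicator g (polarCoord.symm q) :=
    (integral_comp_polarCoord_symm _).symm
  have step3 : (∫ q in polarCoord.target, q.1 • S.indicator g (polarCoord.symm q))
      = ∫ q in polarCoord.target, (Set.Icc ε (ε + τ)).indicator F q.1 * (1:ℝ) := by
    apply setIntegral_congr_fun
    · exact measurableSet_Ioi.prod measurableSet_Ioo
    · exact key
  have step4 : (∫ q in polarCoord.target, (Set.Icc ε (ε + τ)).indicator F q.1 * (1:ℝ))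
      = (∫ t in Set.Ioi (0:ℝ), (Set.Icc ε (ε + τ)).indicator F t)
          * ∫ θ in Set.Ioo (-π) π, (1:ℝ) := by
    rw [show polarCoord.target = Set.Ioi (0:ℝ) ×ˢ Set.Ioo (-π) π from rfl]
    rw [MeasureTheory.Measure.volume_eq_prod]
    exact setIntegral_prod_mul (L := ℝ) ((Set.Icc ε (ε + τ)).indicator F)
      (fun _ => (1:ℝ)) (Set.Ioi 0) (Set.Ioo (-π) π)
  have step5 : (∫ θ in Set.Ioo (-π) π, (1:ℝ)) = 2 * π := by
    simp [Real.volume_Ioo]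
    rw [max_eq_left (by positivity)]
    ring
  have step6 : (∫ t in Set.Ioi (0:ℝ), (Set.Icc ε (ε + τ)).indicator F t)
      = ∫ t in ε..(ε + τ), F t := by
    rw [setIntegral_indicator measurableSet_Icc]
    have hsub : Set.Ioi (0:ℝ) ∩ Set.Icc ε (ε + τ) = Set.Icc ε (ε + τ) :=
      Set.inter_eq_self_of_subset_right (fun t ht => lt_of_lt_of_le hε ht.1)
    rw [hsub]
    rw [intervalIntegral.integral_of_le (by linarith)]
    exact integral_Icc_eq_integral_Ioc
  rw [step1, step2, step3, step4, step5, step6]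
  ring
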